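/- Let A ⊆ H^n be a set of Hermitian matrices containing an invertible matrix S in its real span such that {S⁻¹A : A ∈ A} is a commuting family of diagonalizable matrices with real eigenvalues. Then A is simultaneously diagonalizable via congruence. -/

import Mathlib

open Matrix

open Polynomial Module

lemma aeval_units_conj {R A : Type*} [CommSemiring R] [Semiring A] [Algebra R A]
    (p : R[X]) (u : Aˣ) (x : A) :
    aeval ((u : A) * x * (↑u⁻¹ : A)) p = u * aeval x p * ↑u⁻¹ := by
  induction p using Polynomial.induction_on' with
  | add p q hp hq => simp [hp, hq, mul_add, add_mul]
  | monomial k c =>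
      simp only [aeval_monomial, Units.conj_pow, ← mul_assoc]
      rw [Algebra.commutes c (u : A)]

open Matrix Polynomial Module

lemma conj_entry {m n : Type*} [Fintype n] (A : Matrix n m ℂ) (S : Matrix n n ℂ)
    (B : Matrix n m ℂ) (i j : m) :
    (Aᴴ * S * B) i j = star (fun a => A a i) ⬝ᵥ (S *ᵥ (fun a => B a j)) := by
  simp only [mul_apply, conjTranspose_apply, dotProduct, mulVec, Pi.star_apply,
    Finset.sum_mul, Finset.mul_sum]
  rw [Finset.sum_comm]
  simp [mul_assoc]

lemma exists_basis_gram_diag {n : ℕ} (S : Matrix (Fin n) (Fin n) ℂ) (hS : S.IsHermitian)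
    (W : Submodule ℂ (Fin n → ℂ)) :
    ∃ b : Basis (Fin (Module.finrank ℂ W)) ℂ W, ∀ i j, i ≠ j →
      star ((b i : Fin n → ℂ)) ⬝ᵥ (S *ᵥ ((b j : Fin n → ℂ))) = 0 := by
  classical
  set m := Module.finrank ℂ W with hm
  let b0 : Basis (Fin m) ℂ W := Module.finBasis ℂ W
  let C : Matrix (Fin n) (Fin m) ℂ := Matrix.of fun a k => (b0 k : Fin n → ℂ) a
  have hG : (Cᴴ * S * C).IsHermitian := by
    have h1 : (Cᴴ * S * C)ᴴ = Cᴴ * Sᴴ * C := by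
      simp [conjTranspose_mul, Matrix.mul_assoc]
    show (Cᴴ * S * C)ᴴ = _
    rw [h1, hS.eq]
  set U : Matrix (Fin m) (Fin m) ℂ := ↑(hG.eigenvectorUnitary) with hU
  have hU1 : star U * U = 1 := by
    have := hG.eigenvectorUnitary.2
    rw [Matrix.mem_unitaryGroup_iff'] at this
    exact this
  have hU2 : U * star U = 1 := by
    have := hG.eigenvectorUnitary.2
    rw [Matrix.mem_unitaryGroup_iff] at this
    exact this
  have hdiag : star U * (Cᴴ * S * C) * U = diagonal (RCLike.ofReal ∘ hG.eigenvalues) :=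
    by
      have h := hG.conjStarAlgAut_star_eigenvectorUnitary
      simpa [hU] using h
  have hUisunit : IsUnit U := ⟨⟨U, star U, hU2, hU1⟩, rfl⟩
  have hLU : IsUnit (Matrix.toLinAlgEquiv b0 U) := hUisunit.map (Matrix.toLinAlgEquiv b0)
  let eW : W ≃ₗ[ℂ] W := LinearMap.GeneralLinearGroup.generalLinearEquiv ℂ W hLU.unit
  let b : Basis (Fin m) ℂ W := b0.map eW
  refine ⟨b, fun i j hij => ?_⟩
  have hbi : ∀ i, ((b i : W) : Fin n → ℂ) = fun a => (C * U) a i := by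
    intro i
    have h1 : (b i : W) = (Matrix.toLinAlgEquiv b0 U) (b0 i) := by
      show eW (b0 i) = _
      have h2 : ⇑eW = ⇑(hLU.unit : Module.End ℂ W) :=
        LinearMap.GeneralLinearGroup.coeFn_generalLinearEquiv hLU.unit
      rw [h2, hLU.unit_spec]
    rw [h1, Matrix.toLinAlgEquiv_self]
    funext a
    simp [mul_apply, C, mul_comm]
  rw [hbi i, hbi j, ← conj_entry (C * U) S (C * U) i j]
  have : (C * U)ᴴ * S * (C * U) = star U * (Cᴴ * S * C) * U := by
    rw [conjTranspose_mul, star_eq_conjTranspose]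
    simp only [Matrix.mul_assoc]
  rw [this, hdiag, diagonal_apply_ne _ hij]

/-- If `S` is an invertible element of the real span of a set of Hermitian matrices `𝒜`
such that the matrices `S⁻¹A`, `A ∈ 𝒜`, pairwise commute and are each diagonalizable with
real eigenvalues, then `𝒜` is simultaneously diagonalizable via congruence. -/
theorem inv_mul_diagonalizable_real_commuting_imp_sdc
    {n : ℕ} (𝒜 : Set (Matrix (Fin n) (Fin n) ℂ))
    (hherm : ∀ A ∈ 𝒜, A.IsHermitian)
    (S : Matrix (Fin n) (Fin n) ℂ) (hS : S ∈ Submodule.span ℝ 𝒜) (hSinv : IsUnit S)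
    (hdiagz : ∀ A ∈ 𝒜, ∃ (Q : Matrix (Fin n) (Fin n) ℂ) (d : Fin n → ℝ), IsUnit Q ∧
      S⁻¹ * A = Q * Matrix.diagonal (fun i => (d i : ℂ)) * Q⁻¹)
    (hcomm : ∀ A ∈ 𝒜, ∀ B ∈ 𝒜, Commute (S⁻¹ * A) (S⁻¹ * B)) :
    ∃ P : Matrix (Fin n) (Fin n) ℂ, IsUnit P ∧ ∀ A ∈ 𝒜, (Pᴴ * A * P).IsDiag := by
  classical
  have hdet : IsUnit S.det := (Matrix.isUnit_iff_isUnit_det S).mp hSinv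
  have hSS : S * S⁻¹ = 1 := Matrix.mul_nonsing_inv S hdet
  have hSh : S.IsHermitian := by
    refine Submodule.span_induction (fun A hA => hherm A hA) isHermitian_zero
      (fun A B _ _ hA hB => hA.add hB) (fun c A _ hA => by
        show (c • A)ᴴ = c • A
        rw [Matrix.conjTranspose_smul, star_trivial]
        exact congrArg _ hA) hS
  -- the endomorphisms S⁻¹ * A
  set f : 𝒜 → Module.End ℂ (Fin n → ℂ) :=
    fun A => Matrix.toLinAlgEquiv' (S⁻¹ * (A : Matrix (Fin n) (Fin n) ℂ)) with hf
  have hpair : Pairwise fun i j : 𝒜 => Commute (f i) (f j) :=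
    fun i j _ => (hcomm i.1 i.2 j.1 j.2).map (Matrix.toLinAlgEquiv' (R := ℂ) (n := Fin n))
  -- each f A is "diagonalizable"
  have h' : ∀ A : 𝒜, ⨆ μ, (f A).maxGenEigenspace μ = ⊤ := by
    intro A
    obtain ⟨Q, d, hQ, heq⟩ := hdiagz A.1 A.2
    have hQdet : IsUnit Q.det := (Matrix.isUnit_iff_isUnit_det Q).mp hQ
    have hQQ : Q * Q⁻¹ = 1 := Matrix.mul_nonsing_inv Q hQdet
    have hQQ' : Q⁻¹ * Q = 1 := Matrix.nonsing_inv_mul Q hQdet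
    have hcol : ∀ i, (Q *ᵥ (Pi.single i 1 : Fin n → ℂ)) ∈ (f A).eigenspace ((d i : ℂ)) := by
      intro i
      rw [Module.End.mem_eigenspace_iff]
      have h2 : (S⁻¹ * A.1) * Q = Q * Matrix.diagonal (fun i => (d i : ℂ)) := by
        rw [heq, Matrix.mul_assoc, hQQ', Matrix.mul_one]
      have hsingle : (Pi.single i ((d i : ℂ) * 1) : Fin n → ℂ)
          = (d i : ℂ) • (Pi.single i 1 : Fin n → ℂ) := by
        funext a; by_cases h : a = i <;> simp [Pi.single_apply, h]
      show (S⁻¹ * A.1) *ᵥ (Q *ᵥ (Pi.single i 1 : Fin n → ℂ))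
          = (d i : ℂ) • (Q *ᵥ (Pi.single i 1 : Fin n → ℂ))
      rw [mulVec_mulVec, h2, ← mulVec_mulVec, diagonal_mulVec_single, hsingle, mulVec_smul]
    rw [eq_top_iff]
    intro v _
    have hv : v = ∑ i, (Q⁻¹ *ᵥ v) i • (Q *ᵥ (Pi.single i 1 : Fin n → ℂ)) := by
      have h3 : ∑ i, (Q⁻¹ *ᵥ v) i • (Q *ᵥ (Pi.single i 1 : Fin n → ℂ))
          = Q.mulVecLin (∑ i, (Q⁻¹ *ᵥ v) i • (Pi.single i 1 : Fin n → ℂ)) := by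
        rw [map_sum]
        simp [Matrix.mulVecLin_apply, mulVec_smul]
      rw [h3]
      have h4 : (∑ i, (Q⁻¹ *ᵥ v) i • (Pi.single i 1 : Fin n → ℂ)) = Q⁻¹ *ᵥ v := by
        funext a
        simp [Finset.sum_apply, Pi.single_apply]
      rw [h4, Matrix.mulVecLin_apply, mulVec_mulVec, hQQ, one_mulVec]
    rw [hv]
    refine Submodule.sum_mem _ fun i _ => ?_
    refine Submodule.smul_mem _ _ (Submodule.mem_iSup_of_mem ((d i : ℂ)) ?_)
    exact ((f A).genEigenspace _).mono le_top (hcol i)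
  -- semisimplicity and realness of eigenvalues
  have key : ∀ A : 𝒜, (f A).IsFinitelySemisimple ∧
      ∀ μ : ℂ, (f A).HasEigenvalue μ → ∃ r : ℝ, μ = (r : ℂ) := by
    intro A
    obtain ⟨Q, d, hQ, heq⟩ := hdiagz A.1 A.2
    set s : Finset ℂ := Finset.univ.image (fun i => (d i : ℂ)) with hs
    set p : Polynomial ℂ := ∏ c ∈ s, (X - C c) with hp
    have hsq : Squarefree p :=
      (Polynomial.separable_prod_X_sub_C_iff'.2 (fun x _ y _ h => h)).squarefree
    have haevD : aeval (Matrix.diagonal (fun i => (d i : ℂ))) p = 0 := by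
      have hd : Matrix.diagonal (fun i => (d i : ℂ))
          = Matrix.diagonalAlgHom (n := Fin n) (α := ℂ) ℂ (fun i => (d i : ℂ)) := rfl
      rw [hd, aeval_algHom_apply]
      have hzero : (aeval (fun i => (d i : ℂ)) p) = 0 := by
        rw [hp, map_prod]
        have hzero' : ∀ i, (∏ c ∈ s, aeval (fun i => (d i : ℂ)) (X - C c)) i = 0 := by
          intro i
          rw [Finset.prod_apply]
          refine Finset.prod_eq_zero (Finset.mem_image_of_mem _ (Finset.mem_univ i)) ?_
          simp [Pi.algebraMap_apply]
        funext i
        exact hzero' i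
      rw [hzero, map_zero]
    have haevM : aeval (S⁻¹ * A.1) p = 0 := by
      have hQdet : IsUnit Q.det := (Matrix.isUnit_iff_isUnit_det Q).mp hQ
      have hcu : ((hQ.unit⁻¹ : _ˣ) : Matrix (Fin n) (Fin n) ℂ) = Q⁻¹ := by
        rw [Matrix.coe_units_inv, hQ.unit_spec]
      rw [heq, ← hQ.unit_spec, ← Matrix.coe_units_inv, aeval_units_conj, haevD,
        Matrix.mul_zero, Matrix.zero_mul]
    have haev : aeval (f A) p = 0 := by
      have : f A = (Matrix.toLinAlgEquiv' (R := ℂ) (n := Fin n)).toAlgHom (S⁻¹ * A.1) := rfl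
      rw [this, aeval_algHom_apply, haevM, map_zero]
    constructor
    · exact (Module.End.isSemisimple_of_squarefree_aeval_eq_zero hsq haev).isFinitelySemisimple
    · intro μ hμ
      have hroot : (minpoly ℂ (f A)).IsRoot μ := Module.End.hasEigenvalue_iff_isRoot.mp hμ
      have hdvd : minpoly ℂ (f A) ∣ p := minpoly.dvd ℂ (f A) haev
      have hrootp : p.IsRoot μ := hroot.dvd hdvd
      rw [hp] at hrootp
      have : ∃ c ∈ s, μ - c = 0 := by
        rw [IsRoot.def, eval_prod] at hrootp
        simpa using Finset.prod_eq_zero_iff.mp (by simpa using hrootp)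
      obtain ⟨c, hc, hc0⟩ := this
      obtain ⟨i, _, hi⟩ := Finset.mem_image.mp hc
      exact ⟨d i, by rw [sub_eq_zero] at hc0; rw [hc0, hi]⟩
  -- the joint eigenspace decomposition
  have hmaps : ∀ (i j : 𝒜) (φ : ℂ),
      Set.MapsTo (f i) ((f j).maxGenEigenspace φ) ((f j).maxGenEigenspace φ) := by
    intro i j φ
    refine Module.End.mapsTo_maxGenEigenspace_of_comm ?_ φ
    rcases eq_or_ne i j with rfl | hij
    · exact Commute.refl _
    · exact (hpair hij).symm
  have hind := Module.End.independent_iInf_maxGenEigenspace_of_forall_mapsTo f hmaps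
  have htop :=
    Module.End.iSup_iInf_maxGenEigenspace_eq_top_of_iSup_maxGenEigenspace_eq_top_of_commute
      f hpair h'
  have hInt : DirectSum.IsInternal (fun χ : 𝒜 → ℂ => ⨅ A, (f A).maxGenEigenspace (χ A)) :=
    DirectSum.isInternal_submodule_of_iSupIndep_of_iSup_eq_top hind htop
  set V : (𝒜 → ℂ) → Submodule ℂ (Fin n → ℂ) :=
    fun χ => ⨅ A, (f A).maxGenEigenspace (χ A) with hV
  have hVeig : ∀ (χ : 𝒜 → ℂ) (A : 𝒜), V χ ≤ (f A).eigenspace (χ A) := fun χ A =>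
    le_trans (iInf_le _ A) (le_of_eq ((key A).1.maxGenEigenspace_eq_eigenspace _))
  have hAv : ∀ (χ : 𝒜 → ℂ) (y : Fin n → ℂ), y ∈ V χ → ∀ A : 𝒜,
      (A : Matrix (Fin n) (Fin n) ℂ) *ᵥ y = χ A • (S *ᵥ y) := by
    intro χ y hy A
    have h1 : (S⁻¹ * A.1) *ᵥ y = χ A • y :=
      Module.End.mem_eigenspace_iff.mp (hVeig χ A hy)
    calc A.1 *ᵥ y = (S * (S⁻¹ * A.1)) *ᵥ y := by
          rw [← Matrix.mul_assoc, hSS, Matrix.one_mul]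
      _ = S *ᵥ ((S⁻¹ * A.1) *ᵥ y) := by rw [mulVec_mulVec]
      _ = χ A • (S *ᵥ y) := by rw [h1, mulVec_smul]
  have hrealχ : ∀ χ : 𝒜 → ℂ, V χ ≠ ⊥ → ∀ A : 𝒜, ∃ r : ℝ, χ A = (r : ℂ) := by
    intro χ hχ A
    obtain ⟨y, hy, hy0⟩ := Submodule.exists_mem_ne_zero_of_ne_bot hχ
    exact (key A).2 _ (Module.End.hasEigenvalue_of_hasEigenvector ⟨hVeig χ A hy, hy0⟩)
  have horthS : ∀ χ ψ : 𝒜 → ℂ, χ ≠ ψ → V χ ≠ ⊥ → V ψ ≠ ⊥ →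
      ∀ x ∈ V χ, ∀ y ∈ V ψ, star x ⬝ᵥ (S *ᵥ y) = 0 := by
    intro χ ψ hne hχb hψb x hx y hy
    obtain ⟨A, hA⟩ := Function.ne_iff.mp hne
    have e1 : star x ⬝ᵥ ((A : Matrix (Fin n) (Fin n) ℂ) *ᵥ y)
        = ψ A * (star x ⬝ᵥ (S *ᵥ y)) := by
      rw [hAv ψ y hy A, dotProduct_smul, smul_eq_mul]
    have hAH : (A : Matrix (Fin n) (Fin n) ℂ)ᴴ = A.1 := hherm A.1 A.2
    have e2 : star x ⬝ᵥ ((A : Matrix (Fin n) (Fin n) ℂ) *ᵥ y)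
        = χ A * (star x ⬝ᵥ (S *ᵥ y)) := by
      have h3 : star (A.1 *ᵥ x) ⬝ᵥ y = star x ⬝ᵥ (A.1 *ᵥ y) := by
        rw [star_mulVec, hAH, dotProduct_mulVec]
      have h4 : star (S *ᵥ x) ⬝ᵥ y = star x ⬝ᵥ (S *ᵥ y) := by
        rw [star_mulVec, hSh.eq, dotProduct_mulVec]
      obtain ⟨r, hr⟩ := hrealχ χ hχb A
      rw [← h3, hAv χ x hx A, star_smul, smul_dotProduct, h4, smul_eq_mul]
      rw [hr]
      norm_num
    have hfac : (ψ A - χ A) * (star x ⬝ᵥ (S *ᵥ y)) = 0 := by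
      rw [sub_mul, ← e1, ← e2, sub_self]
    rcases mul_eq_zero.mp hfac with h | h
    · exact absurd (sub_eq_zero.mp h).symm hA
    · exact h
  have hdot0 : ∀ χ ψ : 𝒜 → ℂ, χ ≠ ψ → V χ ≠ ⊥ → V ψ ≠ ⊥ →
      ∀ x ∈ V χ, ∀ y ∈ V ψ, ∀ A : 𝒜,
        star x ⬝ᵥ ((A : Matrix (Fin n) (Fin n) ℂ) *ᵥ y) = 0 := by
    intro χ ψ hne hχb hψb x hx y hy A
    rw [hAv ψ y hy A, dotProduct_smul, horthS χ ψ hne hχb hψb x hx y hy, smul_zero]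
  -- choose good bases of the joint eigenspaces
  choose b hb using fun χ : 𝒜 → ℂ => exists_basis_gram_diag S hSh (V χ)
  let BB := hInt.collectedBasis b
  haveI : Fintype (Σ χ : 𝒜 → ℂ, Fin (Module.finrank ℂ (V χ))) :=
    FiniteDimensional.fintypeBasisIndex BB
  have hcard : Fintype.card (Σ χ : 𝒜 → ℂ, Fin (Module.finrank ℂ (V χ))) = n := by
    rw [← Module.finrank_eq_card_basis BB, Module.finrank_fin_fun]
  let e : Fin n ≃ (Σ χ : 𝒜 → ℂ, Fin (Module.finrank ℂ (V χ))) :=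
    Fintype.equivOfCardEq (by rw [hcard, Fintype.card_fin])
  let B' := BB.reindex e.symm
  have hB' : ∀ i, B' i = BB (e i) := by
    intro i
    rw [Basis.reindex_apply, Equiv.symm_symm]
  set P : Matrix (Fin n) (Fin n) ℂ := Matrix.of fun i j => (B' j) i with hPdef
  have hPmat : P = (Pi.basisFun ℂ (Fin n)).toMatrix ⇑B' := by
    ext i j
    simp [Basis.toMatrix_apply, Pi.basisFun_repr, hPdef]
  have hP : IsUnit P := by
    rw [hPmat]
    letI := Basis.invertibleToMatrix (Pi.basisFun ℂ (Fin n)) B'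
    exact isUnit_of_invertible _
  refine ⟨P, hP, ?_⟩
  intro A hA i j hij
  have hentry : (Pᴴ * A * P) i j = star (B' i : Fin n → ℂ) ⬝ᵥ (A *ᵥ (B' j : Fin n → ℂ)) := by
    rw [conj_entry P A P i j]
    rfl
  rw [hentry]
  -- identify the basis vectors
  have hmem : ∀ k : Fin n, (B' k : Fin n → ℂ) ∈ V (e k).1 := by
    intro k
    rw [hB' k]
    have := hInt.collectedBasis_mem b (e k)
    exact this
  have hBB : ∀ k : Fin n, (B' k : Fin n → ℂ) = ((b (e k).1) (e k).2 : Fin n → ℂ) := by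
    intro k
    rw [hB' k, hInt.collectedBasis_coe b]
  have hne0 : ∀ k : Fin n, (B' k : Fin n → ℂ) ≠ 0 := fun k => B'.ne_zero k
  have hVne : ∀ k : Fin n, V (e k).1 ≠ ⊥ := fun k =>
    Submodule.ne_bot_iff _ |>.mpr ⟨B' k, hmem k, hne0 k⟩
  by_cases hst : (e i).1 = (e j).1
  · -- same block : use the Gram-diagonal property
    have hxB := hBB i
    have hyB := hBB j
    rcases hEi : e i with ⟨χ₁, k₁⟩
    rcases hEj : e j with ⟨χ₂, k₂⟩
    rw [hEi, hEj] at hst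
    have hst' : χ₁ = χ₂ := hst
    subst hst'
    have hk : k₁ ≠ k₂ := fun h => hij (e.injective (by rw [hEi, hEj, h]))
    rw [hEi] at hxB
    rw [hEj] at hyB
    rw [hxB, hyB, hAv χ₁ _ (Submodule.coe_mem _) ⟨A, hA⟩, dotProduct_smul,
      hb χ₁ k₁ k₂ hk, smul_zero]
  · rw [hAv (e j).1 _ (hmem j) ⟨A, hA⟩, dotProduct_smul,
      horthS (e i).1 (e j).1 hst (hVne i) (hVne j) _ (hmem i) _ (hmem j), smul_zero]
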